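/- Let (Ω, μ) be a measure space, let p₁, p₂ : Ω → [0,∞) be measurable with ∫ p₁ dμ < ∞, ∫ p₂ dμ < ∞. Let φ : [0,∞)² → [0,∞) be continuous, strictly increasing in each coordinate, with φ(0,0)=0, lim_{t→∞} φ(tz) = ∞ for nonzero z, and let τ₀ > 0 satisfy φ(τ₀,τ₀) = 1. Define f(x) = +̃_φ(p₁(x), p₂(x)). Then f is integrable and ∫_Ω f dμ ≤ τ₀⁻¹ (∫_Ω p₁ dμ + ∫_Ω p₂ dμ). -/

import Mathlib

open Filter Set MeasureTheory

/-- The Orlicz addition of two nonnegative numbers: the unique `λ > 0` with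
`φ(a/λ, b/λ) = 1` when `a + b > 0`, and `0` when `a = b = 0`. -/
noncomputable def orliczAdd (φ : ℝ → ℝ → ℝ) (a b : ℝ) : ℝ :=
  sInf {l : ℝ | 0 < l ∧ φ (a / l) (b / l) = 1}

section Aux

variable {φ : ℝ → ℝ → ℝ}

/-- Strict antitonicity of `l ↦ φ (a/l) (b/l)`. -/
lemma orlicz_anti
    (hm1 : ∀ y : ℝ, 0 ≤ y → StrictMonoOn (fun x => φ x y) (Set.Ici 0))
    (hm2 : ∀ x : ℝ, 0 ≤ x → StrictMonoOn (fun y => φ x y) (Set.Ici 0))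
    {a b l₁ l₂ : ℝ} (ha : 0 ≤ a) (hb : 0 ≤ b) (hab : 0 < a + b)
    (h1 : 0 < l₁) (h12 : l₁ < l₂) :
    φ (a / l₂) (b / l₂) < φ (a / l₁) (b / l₁) := by
  have h2 : 0 < l₂ := h1.trans h12
  have ha2 : (0:ℝ) ≤ a / l₂ := div_nonneg ha h2.le
  have hb2 : (0:ℝ) ≤ b / l₂ := div_nonneg hb h2.le
  have ha1 : (0:ℝ) ≤ a / l₁ := div_nonneg ha h1.le
  have hb1 : (0:ℝ) ≤ b / l₁ := div_nonneg hb h1.le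
  have haa : a / l₂ ≤ a / l₁ := by gcongr
  have hbb : b / l₂ ≤ b / l₁ := by gcongr
  rcases lt_or_ge 0 a with hA | hA
  · have h' : a / l₂ < a / l₁ := by gcongr
    calc φ (a / l₂) (b / l₂) ≤ φ (a / l₂) (b / l₁) :=
          (hm2 _ ha2).monotoneOn hb2 hb1 hbb
      _ < φ (a / l₁) (b / l₁) := hm1 _ hb1 ha2 ha1 h'
  · have hB : 0 < b := by nlinarith
    have h' : b / l₂ < b / l₁ := by gcongr
    calc φ (a / l₂) (b / l₂) ≤ φ (a / l₁) (b / l₂) :=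
          (hm1 _ hb2).monotoneOn ha2 ha1 haa
      _ < φ (a / l₁) (b / l₁) := hm2 _ ha1 hb2 hb1 h'

/-- Specification of `orliczAdd` in the nondegenerate case. -/
lemma orlicz_spec
    (hc : ContinuousOn (fun z : ℝ × ℝ => φ z.1 z.2) (Set.Ici 0 ×ˢ Set.Ici 0))
    (hm1 : ∀ y : ℝ, 0 ≤ y → StrictMonoOn (fun x => φ x y) (Set.Ici 0))
    (hm2 : ∀ x : ℝ, 0 ≤ x → StrictMonoOn (fun y => φ x y) (Set.Ici 0))
    (hlim : ∀ z₁ z₂ : ℝ, 0 ≤ z₁ → 0 ≤ z₂ → (z₁, z₂) ≠ (0, 0) →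
      Tendsto (fun t => φ (t * z₁) (t * z₂)) atTop atTop)
    {τ₀ : ℝ} (hτ : 0 < τ₀) (hτ1 : φ τ₀ τ₀ = 1)
    {a b : ℝ} (ha : 0 ≤ a) (hb : 0 ≤ b) (hab : 0 < a + b) :
    0 < orliczAdd φ a b ∧ φ (a / orliczAdd φ a b) (b / orliczAdd φ a b) = 1 ∧
      orliczAdd φ a b ≤ (a + b) / τ₀ := by
  set L : ℝ := (a + b) / τ₀ with hL
  have hLpos : 0 < L := div_pos hab hτ
  -- at L the value is at most 1
  have hτL : τ₀ * L = a + b := by rw [hL]; field_simp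
  have hgL : φ (a / L) (b / L) ≤ 1 := by
    have haL : a / L ≤ τ₀ := by rw [div_le_iff₀ hLpos, hτL]; linarith
    have hbL : b / L ≤ τ₀ := by rw [div_le_iff₀ hLpos, hτL]; linarith
    have ha' : (0:ℝ) ≤ a / L := div_nonneg ha hLpos.le
    have hb' : (0:ℝ) ≤ b / L := div_nonneg hb hLpos.le
    calc φ (a / L) (b / L) ≤ φ τ₀ (b / L) :=
          (hm1 _ hb').monotoneOn ha' (le_of_lt hτ |>.trans le_rfl) haL
      _ ≤ φ τ₀ τ₀ := (hm2 _ hτ.le).monotoneOn hb' hτ.le hbL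
      _ = 1 := hτ1
  -- existence of a small point where value ≥ 1
  have hne : (a, b) ≠ ((0:ℝ), (0:ℝ)) := by
    intro h
    rw [Prod.ext_iff] at h
    simp only at h
    rw [h.1, h.2] at hab; linarith
  obtain ⟨t, ht1, ht2⟩ :=
    (((hlim a b ha hb hne).eventually_ge_atTop 1).and
      (eventually_ge_atTop (max 1 (1 / L)))).exists
  have htpos : 0 < t := lt_of_lt_of_le one_pos ((le_max_left _ _).trans ht2)
  set ℓ : ℝ := t⁻¹ with hℓ
  have hℓpos : 0 < ℓ := inv_pos.2 htpos
  have hℓL : ℓ ≤ L := by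
    rw [hℓ, inv_le_comm₀ htpos hLpos] -- may need different lemma
    calc L⁻¹ = 1 / L := (one_div L).symm
      _ ≤ max 1 (1 / L) := le_max_right _ _
      _ ≤ t := ht2
  have hgℓ : 1 ≤ φ (a / ℓ) (b / ℓ) := by
    have : a / ℓ = t * a := by field_simp [hℓ]; rw [hℓ, mul_assoc, inv_mul_cancel₀ htpos.ne', mul_one]
    have h2 : b / ℓ = t * b := by field_simp [hℓ]; rw [hℓ, mul_assoc, inv_mul_cancel₀ htpos.ne', mul_one]
    rw [this, h2]; exact ht1
  -- continuity on the interval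
  have hcont : ContinuousOn (fun l => φ (a / l) (b / l)) (Icc ℓ L) := by
    have hmap : MapsTo (fun l => ((a / l, b / l) : ℝ × ℝ)) (Icc ℓ L)
        (Set.Ici 0 ×ˢ Set.Ici 0) := by
      intro l hl
      have hlpos : 0 < l := lt_of_lt_of_le hℓpos hl.1
      exact ⟨div_nonneg ha hlpos.le, div_nonneg hb hlpos.le⟩
    have hinner : ContinuousOn (fun l => ((a / l, b / l) : ℝ × ℝ)) (Icc ℓ L) := by
      apply ContinuousOn.prodMk
      · exact continuousOn_const.div continuousOn_id fun l hl =>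
          (lt_of_lt_of_le hℓpos hl.1).ne'
      · exact continuousOn_const.div continuousOn_id fun l hl =>
          (lt_of_lt_of_le hℓpos hl.1).ne'
    exact hc.comp hinner hmap
  -- IVT
  have h1mem : (1:ℝ) ∈ Icc (φ (a / L) (b / L)) (φ (a / ℓ) (b / ℓ)) := ⟨hgL, hgℓ⟩
  obtain ⟨l₀, hl₀mem, hl₀⟩ := intermediate_value_Icc' hℓL hcont h1mem
  simp only at hl₀
  have hl₀pos : 0 < l₀ := lt_of_lt_of_le hℓpos hl₀mem.1
  -- the defining set is the singleton {l₀}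
  have hset : {l : ℝ | 0 < l ∧ φ (a / l) (b / l) = 1} = {l₀} := by
    ext l
    simp only [mem_setOf_eq, mem_singleton_iff]
    constructor
    · rintro ⟨hlpos, hl⟩
      by_contra hne'
      rcases lt_or_gt_of_ne hne' with h | h
      · have := orlicz_anti hm1 hm2 ha hb hab hlpos h
        rw [hl, hl₀] at this; linarith
      · have := orlicz_anti hm1 hm2 ha hb hab hl₀pos h
        rw [hl, hl₀] at this; linarith
    · rintro rfl; exact ⟨hl₀pos, hl₀⟩
  have hOA : orliczAdd φ a b = l₀ := by
    rw [orliczAdd, hset, csInf_singleton]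
  refine ⟨by rw [hOA]; exact hl₀pos, by rw [hOA]; exact hl₀, ?_⟩
  rw [hOA]
  exact hl₀mem.2

lemma orlicz_zero (h0 : φ 0 0 = 0) : orliczAdd φ 0 0 = 0 := by
  have : {l : ℝ | 0 < l ∧ φ (0 / l) (0 / l) = 1} = ∅ := by
    ext l
    simp only [mem_setOf_eq, mem_empty_iff_false, iff_false, not_and]
    intro _
    rw [zero_div, h0]
    norm_num
  rw [orliczAdd, this, Real.sInf_empty]

lemma orlicz_level
    (hc : ContinuousOn (fun z : ℝ × ℝ => φ z.1 z.2) (Set.Ici 0 ×ˢ Set.Ici 0))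
    (hm1 : ∀ y : ℝ, 0 ≤ y → StrictMonoOn (fun x => φ x y) (Set.Ici 0))
    (hm2 : ∀ x : ℝ, 0 ≤ x → StrictMonoOn (fun y => φ x y) (Set.Ici 0))
    (h0 : φ 0 0 = 0)
    (hlim : ∀ z₁ z₂ : ℝ, 0 ≤ z₁ → 0 ≤ z₂ → (z₁, z₂) ≠ (0, 0) →
      Tendsto (fun t => φ (t * z₁) (t * z₂)) atTop atTop)
    {τ₀ : ℝ} (hτ : 0 < τ₀) (hτ1 : φ τ₀ τ₀ = 1)
    {a b c : ℝ} (ha : 0 ≤ a) (hb : 0 ≤ b) (hcpos : 0 < c) :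
    c < orliczAdd φ a b ↔ 0 < a + b ∧ 1 < φ (a / c) (b / c) := by
  rcases eq_or_lt_of_le (by positivity : (0:ℝ) ≤ a + b) with hab | hab
  · have ha0 : a = 0 := by linarith
    have hb0 : b = 0 := by linarith
    subst ha0; subst hb0
    rw [orlicz_zero h0]
    constructor
    · intro h; linarith
    · rintro ⟨h, -⟩; linarith
  · obtain ⟨hpos, heq, -⟩ := orlicz_spec hc hm1 hm2 hlim hτ hτ1 ha hb hab
    set l₀ := orliczAdd φ a b with hl₀
    constructor
    · intro h
      have := orlicz_anti hm1 hm2 ha hb hab hcpos h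
      rw [heq] at this
      exact ⟨hab, this⟩
    · rintro ⟨-, h⟩
      by_contra hcon
      push_neg at hcon
      rcases eq_or_lt_of_le hcon with h' | h'
      · rw [← h', heq] at h; linarith
      · have := orlicz_anti hm1 hm2 ha hb hab hpos h'
        rw [heq] at this; linarith

lemma orlicz_nonneg (a b : ℝ) : 0 ≤ orliczAdd φ a b :=
  Real.sInf_nonneg fun _ hx => hx.1.le

end Aux

theorem orlicz_sum_integrable
    {Ω : Type*} [MeasurableSpace Ω] (μ : Measure Ω)
    (p₁ p₂ : Ω → ℝ) (hp₁m : Measurable p₁) (hp₂m : Measurable p₂)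
    (hp₁0 : ∀ x, 0 ≤ p₁ x) (hp₂0 : ∀ x, 0 ≤ p₂ x)
    (hp₁i : Integrable p₁ μ) (hp₂i : Integrable p₂ μ)
    (φ : ℝ → ℝ → ℝ)
    (hc : ContinuousOn (fun z : ℝ × ℝ => φ z.1 z.2) (Set.Ici 0 ×ˢ Set.Ici 0))
    (hm1 : ∀ y : ℝ, 0 ≤ y → StrictMonoOn (fun x => φ x y) (Set.Ici 0))
    (hm2 : ∀ x : ℝ, 0 ≤ x → StrictMonoOn (fun y => φ x y) (Set.Ici 0))
    (h0 : φ 0 0 = 0)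
    (hlim : ∀ z₁ z₂ : ℝ, 0 ≤ z₁ → 0 ≤ z₂ → (z₁, z₂) ≠ (0, 0) →
      Tendsto (fun t => φ (t * z₁) (t * z₂)) atTop atTop)
    (τ₀ : ℝ) (hτ : 0 < τ₀) (hτ1 : φ τ₀ τ₀ = 1) :
    Integrable (fun x => orliczAdd φ (p₁ x) (p₂ x)) μ ∧
      ∫ x, orliczAdd φ (p₁ x) (p₂ x) ∂μ ≤ τ₀⁻¹ * (∫ x, p₁ x ∂μ + ∫ x, p₂ x ∂μ) := by
  set f := fun x => orliczAdd φ (p₁ x) (p₂ x) with hf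
  -- pointwise bound
  have hbound : ∀ x, f x ≤ τ₀⁻¹ * (p₁ x + p₂ x) := by
    intro x
    rcases eq_or_lt_of_le (add_nonneg (hp₁0 x) (hp₂0 x)) with hab | hab
    · have h1 : p₁ x = 0 := by have := hp₁0 x; have := hp₂0 x; linarith
      have h2 : p₂ x = 0 := by have := hp₁0 x; have := hp₂0 x; linarith
      simp only [hf, h1, h2, orlicz_zero h0, add_zero, mul_zero, le_refl]
    · have h := (orlicz_spec hc hm1 hm2 hlim hτ hτ1 (hp₁0 x) (hp₂0 x) hab).2.2
      rw [div_eq_inv_mul] at h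
      exact h
  -- measurability
  have hmeas : Measurable f := by
    apply measurable_of_Ioi
    intro c
    rcases lt_trichotomy c 0 with hc0 | hc0 | hc0
    · have : f ⁻¹' Ioi c = univ := by
        ext x
        simp only [mem_preimage, mem_Ioi, mem_univ, iff_true]
        exact lt_of_lt_of_le hc0 (orlicz_nonneg _ _)
      rw [this]; exact MeasurableSet.univ
    · subst hc0
      have : f ⁻¹' Ioi 0 = {x | 0 < p₁ x + p₂ x} := by
        ext x
        simp only [mem_preimage, mem_Ioi, mem_setOf_eq]
        constructor
        · intro h
          by_contra hcon
          push_neg at hcon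
          have hab : p₁ x + p₂ x = 0 :=
            le_antisymm hcon (add_nonneg (hp₁0 x) (hp₂0 x))
          have h1 : p₁ x = 0 := by have := hp₁0 x; have := hp₂0 x; linarith
          have h2 : p₂ x = 0 := by have := hp₁0 x; have := hp₂0 x; linarith
          rw [hf] at h
          simp only [h1, h2, orlicz_zero h0] at h
          exact lt_irrefl 0 h
        · intro h
          exact (orlicz_spec hc hm1 hm2 hlim hτ hτ1 (hp₁0 x) (hp₂0 x) h).1
      rw [this]
      exact measurableSet_lt measurable_const (hp₁m.add hp₂m)
    · -- c > 0: use the level set characterization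
      have hkey : f ⁻¹' Ioi c =
          {x | 0 < p₁ x + p₂ x} ∩ {x | (p₁ x / c, p₂ x / c) ∈
            (fun z : ℝ × ℝ => φ z.1 z.2) ⁻¹' Ioi 1 ∩ (Set.Ici 0 ×ˢ Set.Ici 0)} := by
        ext x
        simp only [mem_preimage, mem_Ioi, mem_inter_iff, mem_setOf_eq, mem_prod, mem_Ici]
        rw [hf]
        rw [orlicz_level hc hm1 hm2 h0 hlim hτ hτ1 (hp₁0 x) (hp₂0 x) hc0]
        constructor
        · rintro ⟨h1, h2⟩
          exact ⟨h1, ⟨h2, div_nonneg (hp₁0 x) hc0.le, div_nonneg (hp₂0 x) hc0.le⟩⟩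
        · rintro ⟨h1, h2, -⟩
          exact ⟨h1, h2⟩
      rw [hkey]
      apply MeasurableSet.inter
      · exact measurableSet_lt measurable_const (hp₁m.add hp₂m)
      · obtain ⟨u, huo, hu⟩ := continuousOn_iff'.1 hc (Ioi 1) isOpen_Ioi
        have hQ : MeasurableSet ((Set.Ici (0:ℝ)) ×ˢ (Set.Ici (0:ℝ))) :=
          measurableSet_Ici.prod measurableSet_Ici
        rw [hu]
        exact ((hp₁m.div_const c).prodMk (hp₂m.div_const c))
          (huo.measurableSet.inter hQ)
  -- integrability
  have hgi : Integrable (fun x => τ₀⁻¹ * (p₁ x + p₂ x)) μ :=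
    (hp₁i.add hp₂i).const_mul τ₀⁻¹
  have hfi : Integrable f μ := by
    apply Integrable.mono' hgi hmeas.aestronglyMeasurable
    filter_upwards with x
    rw [Real.norm_eq_abs, abs_of_nonneg (orlicz_nonneg _ _)]
    exact hbound x
  refine ⟨hfi, ?_⟩
  calc ∫ x, f x ∂μ ≤ ∫ x, τ₀⁻¹ * (p₁ x + p₂ x) ∂μ :=
        integral_mono hfi hgi hbound
    _ = τ₀⁻¹ * (∫ x, p₁ x ∂μ + ∫ x, p₂ x ∂μ) := by
        rw [integral_const_mul, integral_add hp₁i hp₂i]
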